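/- If π : V(H) → V(G) is a covering map and G is connected, then all fibers of π have the same cardinality; that is, for any two vertices u, w ∈ V(G), the sets π⁻¹(u) and π⁻¹(w) have the same cardinality. -/
import Mathlib


/-- If `π : V(H) → V(G)` is a surjective covering map of simple graphs and `G` is
connected, then all fibers of `π` have the same cardinality. -/
theorem covering_map_fibers_equicardinal
    {α β : Type*}
    (H : SimpleGraph α) (G : SimpleGraph β)
    (π : α → β)
    (hom : ∀ u v : α, H.Adj u v → G.Adj (π u) (π v))
    (cov : ∀ v : α, Set.BijOn π (H.neighborSet v) (G.neighborSet (π v)))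
    (hsurj : Function.Surjective π)
    (hconn : G.Connected) :
    ∀ u w : β, Nat.card (π ⁻¹' {u}) = Nat.card (π ⁻¹' {w}) := by
  have next : ∀ {u w : β}, G.Adj u w → ∀ a : α, π a = u →
      ∃ b, H.Adj a b ∧ π b = w := by
    intro u w huw a ha
    have hw : w ∈ G.neighborSet (π a) := by
      rw [ha]; exact huw
    obtain ⟨b, hb, hb'⟩ := (cov a).surjOn hw
    exact ⟨b, hb, hb'⟩
  have key : ∀ {u w : β}, G.Adj u w →
      Nat.card (π ⁻¹' {u}) = Nat.card (π ⁻¹' {w}) := by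
    intro u w huw
    refine Nat.card_eq_of_bijective (fun a =>
      ⟨(next huw a.1 a.2).choose, (next huw a.1 a.2).choose_spec.2⟩) ⟨?_, ?_⟩
    · rintro ⟨a₁, ha₁⟩ ⟨a₂, ha₂⟩ hff
      have h1 := (next huw a₁ ha₁).choose_spec
      have h2 := (next huw a₂ ha₂).choose_spec
      have hb : (next huw a₁ ha₁).choose = (next huw a₂ ha₂).choose :=
        congrArg Subtype.val hff
      set b := (next huw a₁ ha₁).choose
      have hm1 : a₁ ∈ H.neighborSet b := h1.1.symm
      have hm2 : a₂ ∈ H.neighborSet b := by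
        rw [hb]; exact h2.1.symm
      have : π a₁ = π a₂ := by
        rw [ha₁, ha₂]
      exact Subtype.ext ((cov b).injOn hm1 hm2 this)
    · rintro ⟨b, hb⟩
      obtain ⟨a, hab, hau⟩ := next huw.symm b hb
      refine ⟨⟨a, hau⟩, ?_⟩
      have h := (next huw a hau).choose_spec
      have : (next huw a hau).choose = b :=
        (cov a).injOn h.1 hab.symm (by rw [h.2, hb])
      exact Subtype.ext this
  intro u w
  obtain ⟨p⟩ := hconn u w
  induction p with
  | nil => rfl
  | cons h _ ih => exact (key h).trans ih
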